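/- Let g be a smooth Riemannian metric on an open set U ⊆ E, let f : E → ℝ be smooth with g-gradient G, let λ : U → ℝ be smooth, and let Γ be a connection on U that straightens f with factor λ, with non-metricity tensor C. Then along every gradient descent curve γ of f, the non-metricity component along the flow is expressed through the Levi-Civita covariant acceleration: for all t, C (γ t) (deriv γ t) (deriv γ t) (deriv γ t) = 2 * ( λ (γ t) * g (γ t) (deriv γ t) (deriv γ t) + g (γ t) (deriv γ t) (deriv (deriv γ) t + Γ^g (γ t) (deriv γ t) (deriv γ t)) ), where deriv (deriv γ) t + Γ^g (γ t) (deriv γ t) (deriv γ t) is the Levi-Civita covariant acceleration ∇^g_{γ̇} γ̇. -/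

import Mathlib

open scoped Topology

noncomputable section

/-- `E n` is the Euclidean space `ℝ^n`. -/
abbrev E (n : ℕ) := EuclideanSpace ℝ (Fin n)

/-- **Eq. (9) of the paper.** Along every gradient descent curve `γ` of `f`, the non-metricity
component of a straightening connection along the flow is expressed through the Levi-Civita
covariant acceleration:
`C(γ̇, γ̇, γ̇) = 2 [λ(γ) g(γ̇, γ̇) + g(γ̇, ∇^g_{γ̇} γ̇)]`,
where `∇^g_{γ̇} γ̇ = γ̈ + Γ^g(γ̇, γ̇)`. -/
theorem nonmetricity_via_covariant_acceleration
    (n : ℕ) (hn : 1 ≤ n)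
    (U : Set (E n)) (hU : IsOpen U)
    -- a smooth Riemannian metric on `U`
    (g : E n → E n →L[ℝ] E n →L[ℝ] ℝ)
    (hg_smooth : ContDiffOn ℝ (⊤ : ℕ∞) g U)
    (hg_symm : ∀ x ∈ U, ∀ u v : E n, g x u v = g x v u)
    (hg_pos : ∀ x ∈ U, ∀ v : E n, v ≠ 0 → 0 < g x v v)
    -- a smooth function `f` with `g`-gradient `G`
    (f : E n → ℝ) (hf : ContDiff ℝ (⊤ : ℕ∞) f)
    (G : E n → E n) (hG_smooth : ContDiffOn ℝ (⊤ : ℕ∞) G U)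
    (hG : ∀ x ∈ U, ∀ v : E n, g x (G x) v = fderiv ℝ f x v)
    -- a smooth factor `λ`
    (lam : E n → ℝ) (hlam : ContDiffOn ℝ (⊤ : ℕ∞) lam U)
    -- a connection `Γ` on `U` straightening `f` with factor `λ`
    (Γ : E n → E n →L[ℝ] E n →L[ℝ] E n)
    (hΓ_smooth : ContDiffOn ℝ (⊤ : ℕ∞) Γ U)
    (hstr : ∀ x ∈ U, fderiv ℝ G x (G x) + Γ x (G x) (G x) = lam x • G x)
    -- the non-metricity tensor `C` of `Γ` relative to `g`
    (C : E n → E n → E n → E n → ℝ)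
    (hC : ∀ x ∈ U, ∀ w u v : E n,
      C x w u v = fderiv ℝ (fun y => g y u v) x w - g x (Γ x w u) v - g x u (Γ x w v))
    -- the Levi-Civita Christoffel form of `g`
    (Γg : E n → E n →L[ℝ] E n →L[ℝ] E n)
    (hΓg : ∀ x ∈ U, ∀ u v w : E n,
      2 * g x (Γg x u v) w
        = fderiv ℝ (fun y => g y v w) x u + fderiv ℝ (fun y => g y u w) x v
          - fderiv ℝ (fun y => g y u v) x w) :
    -- along every gradient descent curve of `f`:
    ∀ γ : ℝ → E n, (∀ t : ℝ, γ t ∈ U) → ContDiff ℝ 1 γ →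
      (∀ t : ℝ, deriv γ t = -G (γ t)) →
      ∀ t : ℝ,
        C (γ t) (deriv γ t) (deriv γ t) (deriv γ t)
          = 2 * (lam (γ t) * g (γ t) (deriv γ t) (deriv γ t)
              + g (γ t) (deriv γ t)
                  (deriv (deriv γ) t + Γg (γ t) (deriv γ t) (deriv γ t))) := by

  intro γ hγU hγC1 hode t
  set x := γ t with hxdef
  have hx : x ∈ U := hγU t
  have hGdiff : DifferentiableAt ℝ G x :=
    (hG_smooth.contDiffAt (hU.mem_nhds hx)).differentiableAt (by simp)
  have hγd : DifferentiableAt ℝ γ t := (hγC1.differentiable one_ne_zero).differentiableAt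
  set Gx := G x with hGx
  set A := fderiv ℝ G x Gx with hA
  have hv : deriv γ t = -Gx := hode t
  have hdd : deriv (deriv γ) t = A := by
    have hfun : deriv γ = fun s => -G (γ s) := funext hode
    rw [hfun]
    have h1 : HasDerivAt (fun s => G (γ s)) (fderiv ℝ G (γ t) (deriv γ t)) t :=
      hGdiff.hasFDerivAt.comp_hasDerivAt t hγd.hasDerivAt
    have h2 : deriv (fun s => -G (γ s)) t = -(fderiv ℝ G x (deriv γ t)) := (h1.neg).deriv
    rw [h2, hv]
    simp [hA]
  set D := fderiv ℝ (fun y => g y Gx Gx) x with hD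
  have hLC : 2 * g x (Γg x Gx Gx) Gx = D Gx := by
    have h := hΓg x hx Gx Gx Gx
    rw [h]; ring
  have hΓeq : Γ x Gx Gx = lam x • Gx - A := eq_sub_of_add_eq' (hstr x hx)
  have hCval := hC x hx (deriv γ t) (deriv γ t) (deriv γ t)
  rw [hCval, hv, hdd]
  have hfe : (fun y => g y (-Gx) (-Gx)) = fun y => g y Gx Gx := by
    funext y; simp
  rw [hfe]
  have hs1 := hg_symm x hx Gx A
  have hs2 := hg_symm x hx Gx (Γg x Gx Gx)
  simp only [map_neg, neg_neg, ContinuousLinearMap.neg_apply]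
  rw [hΓeq]
  simp only [map_sub, map_smul, map_add, ContinuousLinearMap.sub_apply,
    ContinuousLinearMap.smul_apply, ContinuousLinearMap.add_apply, smul_eq_mul]
  linarith [hLC]


end
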